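/- In the transductive Context-FTPL setup, fix a sequence (x^1,f^1),…,(x^T,f^T) of contexts x^τ ∈ X and loss functions f^τ : {0,1}^K → ℝ. For each t, with the same perturbation draw, let π^t (respectively π^{t+1}) be the smallest (in the tie-breaking order) minimizer over π ∈ Π of Σ_{τ=1}^{t−1} f^τ(π(x^τ)) + Σ_{x ∈ X} ⟨π(x), ℓ_x⟩ (respectively of Σ_{τ=1}^{t} f^τ(π(x^τ)) + Σ_{x ∈ X} ⟨π(x), ℓ_x⟩). Then E[ f^t(π^t(x^t)) − f^t(π^{t+1}(x^t)) ] ≤ 4·ε·K·‖f^t‖_*², where the expectation is over the i.i.d. Laplace(ε) perturbation. (Lemma: Transductive Stability.) -/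

import Mathlib

open MeasureTheory Finset

/-- The i.i.d. product Laplace(ε) measure on `ι → ℝ`: density
`z ↦ ∏ i (ε/2)·exp(−ε|z i|)` with respect to Lebesgue measure. -/
noncomputable def laplacePi (ι : Type*) [Fintype ι] (ε : ℝ) :
    MeasureTheory.Measure (ι → ℝ) :=
  (MeasureTheory.volume : MeasureTheory.Measure (ι → ℝ)).withDensity
    fun z => ENNReal.ofReal (∏ i, ε / 2 * Real.exp (-ε * |z i|))

/-- `⟨a, v⟩` for `a ∈ {0,1}^K` (as a Boolean vector) and `v ∈ ℝ^K`. -/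
def dotp {K : ℕ} (a : Fin K → Bool) (v : Fin K → ℝ) : ℝ :=
  ∑ j, if a j then v j else 0

/-- `‖f‖_* = max_{a ∈ {0,1}^K} |f a|` for a loss function `f`. -/
noncomputable def dualNorm {K : ℕ} (f : (Fin K → Bool) → ℝ) : ℝ :=
  Finset.univ.sup' ⟨fun _ => false, Finset.mem_univ _⟩ fun a => |f a|

/-- The smallest (in the tie-breaking linear order) minimizer of `c` over the
finite nonempty policy set `P`. -/
noncomputable def argminTie {P : Type*} [Fintype P] [Nonempty P] [LinearOrder P]
    (c : P → ℝ) : P :=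
  haveI := Classical.decPred fun p : P => ∀ q, c p ≤ c q
  (Finset.univ.filter fun p : P => ∀ q, c p ≤ c q).min' (by
    obtain ⟨p, -, hp⟩ := Finset.exists_min_image (Finset.univ : Finset P) c
      ⟨Classical.arbitrary P, Finset.mem_univ _⟩
    exact ⟨p, Finset.mem_filter.mpr ⟨Finset.mem_univ _, fun q => hp q (Finset.mem_univ q)⟩⟩)

section argmin
variable {P : Type*} [Fintype P] [Nonempty P] [LinearOrder P]

lemma argminTie_min (c : P → ℝ) (q : P) : c (argminTie c) ≤ c q := by
  have h : argminTie c ∈ (haveI := Classical.decPred fun p : P => ∀ q, c p ≤ c q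
      Finset.univ.filter fun p : P => ∀ q, c p ≤ c q) := Finset.min'_mem _ _
  exact ((@Finset.mem_filter _ _ (Classical.decPred _) _ _).mp h).2 q

lemma argminTie_le (c : P → ℝ) (q : P) (hq : ∀ r, c q ≤ c r) : argminTie c ≤ q := by
  apply Finset.min'_le
  exact (@Finset.mem_filter _ _ (Classical.decPred _) _ _).mpr ⟨Finset.mem_univ _, hq⟩

lemma argminTie_eq_iff (c : P → ℝ) (p : P) :
    argminTie c = p ↔ (∀ q, c p ≤ c q) ∧ ∀ q, (∀ r, c q ≤ c r) → p ≤ q := by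
  constructor
  · rintro rfl
    exact ⟨argminTie_min c, fun q hq => argminTie_le c q hq⟩
  · rintro ⟨h1, h2⟩
    exact le_antisymm (argminTie_le c p h1) (h2 _ (argminTie_min c))

lemma measurableSet_argminTie {α : Type*} [MeasurableSpace α]
    (s : P → α → ℝ) (hs : ∀ p, Measurable (s p)) (p0 : P) :
    MeasurableSet {z | argminTie (fun p => s p z) = p0} := by
  have hrw : {z | argminTie (fun p => s p z) = p0} =
      (⋂ q, {z | s p0 z ≤ s q z}) ∩
        ⋂ q, {z | (∀ r, s q z ≤ s r z) → p0 ≤ q} := by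
    ext z
    simp only [Set.mem_setOf_eq, Set.mem_inter_iff, Set.mem_iInter, argminTie_eq_iff]
  rw [hrw]
  refine MeasurableSet.inter
    (MeasurableSet.iInter fun q => measurableSet_le (hs p0) (hs q))
    (MeasurableSet.iInter fun q => ?_)
  by_cases hq : p0 ≤ q
  · have : {z | (∀ r, s q z ≤ s r z) → p0 ≤ q} = Set.univ := by
      ext z; simp [hq]
    rw [this]; exact MeasurableSet.univ
  · have : {z | (∀ r, s q z ≤ s r z) → p0 ≤ q} = (⋂ r, {z | s q z ≤ s r z})ᶜ := by
      ext z
      simp only [Set.mem_compl_iff, Set.mem_iInter, Set.mem_setOf_eq]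
      constructor
      · intro h hall
        exact hq (h hall)
      · intro h hall
        exact absurd hall h
    rw [this]
    exact (MeasurableSet.iInter fun r => measurableSet_le (hs q) (hs r)).compl

end argmin

open scoped ENNReal

lemma hyperplane_null {ι : Type*} [Fintype ι] [DecidableEq ι]
    (coef : ι → ℝ) (i0 : ι) (h0 : coef i0 ≠ 0) (d : ℝ) :
    (volume : Measure (ι → ℝ)) {z | ∑ i, coef i * z i = d} = 0 := by
  set ψ : (ι → ℝ) →ₗ[ℝ] ℝ := ∑ i, coef i • (LinearMap.proj i) with hψ
  have hψapp : ∀ z, ψ z = ∑ i, coef i * z i := by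
    intro z
    simp [hψ, LinearMap.sum_apply, LinearMap.proj_apply]
  have hker : (LinearMap.ker ψ : Submodule ℝ (ι → ℝ)) ≠ ⊤ := by
    intro h
    have h1 : ψ (Pi.single i0 1) = 0 := by
      have : Pi.single i0 1 ∈ LinearMap.ker ψ := h ▸ Submodule.mem_top
      simpa using this
    rw [hψapp] at h1
    simp [Pi.single_apply, mul_ite, Finset.sum_ite_eq'] at h1
    exact h0 h1
  by_cases hne : ∃ z0 : ι → ℝ, ∑ i, coef i * z0 i = d
  · obtain ⟨z0, hz0⟩ := hne
    have hset : {z : ι → ℝ | ∑ i, coef i * z i = d} =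
        (fun z => -z0 + z) ⁻¹' (LinearMap.ker ψ : Set (ι → ℝ)) := by
      ext z
      simp only [Set.mem_setOf_eq, Set.mem_preimage, SetLike.mem_coe, LinearMap.mem_ker, hψapp]
      have hexp : ∑ i, coef i * (-z0 + z) i
          = (∑ i, coef i * z i) - ∑ i, coef i * z0 i := by
        rw [← Finset.sum_sub_distrib]
        exact Finset.sum_congr rfl fun i _ => by simp [Pi.add_apply]; ring
      rw [hexp, hz0]
      constructor <;> intro h <;> linarith
    rw [hset, measure_preimage_add]
    exact Measure.addHaar_submodule _ _ hker
  · have hempty : {z : ι → ℝ | ∑ i, coef i * z i = d} = ∅ := by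
      ext z; simp only [Set.mem_setOf_eq, Set.mem_empty_iff_false, iff_false]
      exact fun h => hne ⟨z, h⟩
    simp [hempty]




lemma integrable_lap {ε : ℝ} (hε : 0 < ε) :
    Integrable (fun x : ℝ => ε / 2 * Real.exp (-ε * |x|)) := by
  apply Integrable.const_mul
  have hIoi : IntegrableOn (fun x : ℝ => Real.exp (-ε * |x|)) (Set.Ioi 0) :=
    (exp_neg_integrableOn_Ioi 0 hε).congr_fun
      (fun x hx => by rw [abs_of_pos hx]) measurableSet_Ioi
  have hIci : IntegrableOn (fun x : ℝ => Real.exp (-ε * |x|)) (Set.Ici 0) := by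
    rwa [integrableOn_Ici_iff_integrableOn_Ioi]
  have hIic : IntegrableOn (fun x : ℝ => Real.exp (-ε * |x|)) (Set.Iic 0) := by
    rw [← Measure.map_neg_eq_self (volume : Measure ℝ)]
    have m : MeasurableEmbedding fun x : ℝ => -x := (Homeomorph.neg ℝ).measurableEmbedding
    rw [m.integrableOn_map_iff]
    simpa [Function.comp_def] using hIci
  have : IntegrableOn (fun x : ℝ => Real.exp (-ε * |x|)) (Set.Iic 0 ∪ Set.Ioi 0) :=
    hIic.union hIoi
  rwa [Set.Iic_union_Ioi, integrableOn_univ] at this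

lemma integral_lap {ε : ℝ} (hε : 0 < ε) : ∫ x : ℝ, ε / 2 * Real.exp (-ε * |x|) = 1 := by
  rw [integral_comp_abs (f := fun x => ε / 2 * Real.exp (-ε * x))]
  have : ∀ x : ℝ, ε / 2 * Real.exp (-ε * x) = ε / 2 * Real.exp (-(ε * x)) := by intro x; ring_nf
  simp_rw [this]
  rw [MeasureTheory.integral_const_mul, integral_comp_mul_left_Ioi (fun x => Real.exp (-x)) 0 hε]
  simp only [mul_zero, integral_exp_neg_Ioi, neg_zero, Real.exp_zero, smul_eq_mul, mul_one]
  field_simp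

lemma lap_prob (ι : Type*) [Fintype ι] {ε : ℝ} (hε : 0 < ε) :
    IsProbabilityMeasure (laplacePi ι ε) := by
  constructor
  rw [laplacePi, withDensity_apply _ MeasurableSet.univ, Measure.restrict_univ,
    ← ofReal_integral_eq_lintegral_ofReal]
  · rw [integral_fintype_prod_volume_eq_prod (fun (_ : ι) (x : ℝ) => ε / 2 * Real.exp (-ε * |x|))]
    simp only [integral_lap hε, Finset.prod_const, one_pow, ENNReal.ofReal_one]
  · exact Integrable.fintype_prod (fun _ => integrable_lap hε)
  · refine Filter.Eventually.of_forall fun z => Finset.prod_nonneg fun i _ => by positivity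

lemma laplacePi_ac {ι : Type*} [Fintype ι] {ε : ℝ} :
    laplacePi ι ε ≪ (volume : Measure (ι → ℝ)) :=
  withDensity_absolutelyContinuous _ _

lemma measurable_lapdens {ι : Type*} [Fintype ι] (ε : ℝ) :
    Measurable (fun z : ι → ℝ => ENNReal.ofReal (∏ i, ε / 2 * Real.exp (-ε * |z i|))) := by
  apply ENNReal.measurable_ofReal.comp
  apply Finset.measurable_prod
  intro i _
  fun_prop

lemma laplacePi_translate_le {ι : Type*} [Fintype ι] {ε : ℝ} (hε : 0 < ε) (w : ι → ℝ)
    (S : Set (ι → ℝ)) (hS : MeasurableSet S) :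
    laplacePi ι ε ((fun z => z + w) ⁻¹' S) ≤
      ENNReal.ofReal (Real.exp (ε * ∑ i, |w i|)) * laplacePi ι ε S := by
  set ρ : (ι → ℝ) → ℝ≥0∞ :=
    fun z => ENNReal.ofReal (∏ i, ε / 2 * Real.exp (-ε * |z i|)) with hρ
  have hρm : Measurable ρ := measurable_lapdens ε
  set C : ℝ≥0∞ := ENNReal.ofReal (Real.exp (ε * ∑ i, |w i|)) with hC
  have hSw : MeasurableSet ((fun z : ι → ℝ => z + w) ⁻¹' S) :=
    hS.preimage (measurable_id.add_const w)
  have key : ∀ u : ι → ℝ, ρ (u - w) ≤ C * ρ u := by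
    intro u
    rw [hρ, hC, ← ENNReal.ofReal_mul (Real.exp_nonneg _)]
    apply ENNReal.ofReal_le_ofReal
    have hexp : Real.exp (ε * ∑ i, |w i|) = ∏ i, Real.exp (ε * |w i|) := by
      rw [← Real.exp_sum, Finset.mul_sum]
    rw [hexp, ← Finset.prod_mul_distrib]
    apply Finset.prod_le_prod
    · intro i _; positivity
    · intro i _
      simp only [Pi.sub_apply]
      rw [mul_comm (Real.exp (ε * |w i|)) _, mul_assoc, ← Real.exp_add]
      apply mul_le_mul_of_nonneg_left _ (by positivity : (0:ℝ) ≤ ε / 2)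
      apply Real.exp_le_exp.mpr
      have habs : |u i| ≤ |u i - w i| + |w i| := by
        calc |u i| = |(u i - w i) + w i| := by ring_nf
        _ ≤ |u i - w i| + |w i| := abs_add_le _ _
      nlinarith [hε.le]
  calc laplacePi ι ε ((fun z => z + w) ⁻¹' S)
      = ∫⁻ z, ((fun z : ι → ℝ => z + w) ⁻¹' S).indicator ρ z ∂volume := by
        rw [laplacePi, withDensity_apply _ hSw, ← lintegral_indicator hSw]
    _ = ∫⁻ z, (S.indicator (fun u => ρ (u - w))) (z + w) ∂volume := by
        apply lintegral_congr
        intro z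
        by_cases hz : z + w ∈ S
        · simp [Set.indicator_apply, hz, Set.mem_preimage]
        · simp [Set.indicator_apply, hz, Set.mem_preimage]
    _ = ∫⁻ u, (S.indicator (fun u => ρ (u - w))) u ∂volume :=
        lintegral_add_right_eq_self _ w
    _ = ∫⁻ u in S, ρ (u - w) ∂volume := by rw [lintegral_indicator hS]
    _ ≤ ∫⁻ u in S, C * ρ u ∂volume := lintegral_mono fun u => key u
    _ = C * ∫⁻ u in S, ρ u ∂volume := lintegral_const_mul C hρm
    _ = C * laplacePi ι ε S := by rw [laplacePi, withDensity_apply _ hS]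

lemma stab_core {ι : Type*} [Fintype ι] [DecidableEq ι]
    {P : Type*} [Fintype P] [Nonempty P] [LinearOrder P]
    {A : Type*} [Fintype A] [DecidableEq A]
    {ε F W : ℝ} (hε : 0 < ε) (hF0 : 0 ≤ F) (hW0 : 0 ≤ W)
    (φ : P → ι → ℝ) (act : P → A) (g : A → ℝ) (c0 c1 : P → ℝ)
    (w : A → ι → ℝ) (H : A → A → ℝ)
    (hg : ∀ a, |g a| ≤ F)
    (hc1 : ∀ p, c1 p = c0 p + g (act p))
    (hact : ∀ p q, φ p = φ q → act p = act q)
    (hw : ∀ a, ∑ i, |w a i| ≤ W)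
    (hwact : ∀ a p, ∑ i, φ p i * w a i = H a (act p))
    (hH : ∀ a b, b ≠ a → H a a + 2 * F ≤ H a b) :
    (∫ z, (g (act (argminTie fun p => c0 p + ∑ i, φ p i * z i)) -
           g (act (argminTie fun p => c1 p + ∑ i, φ p i * z i)))
        ∂(laplacePi ι ε)) ≤ 2 * F * (ε * W) := by
  classical
  set ν := laplacePi ι ε with hν
  haveI : IsProbabilityMeasure ν := lap_prob ι hε
  have hsm : ∀ (c : P → ℝ) (p : P),
      Measurable (fun z : ι → ℝ => c p + ∑ i, φ p i * z i) := by
    intro c p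
    exact Measurable.const_add
      (Finset.measurable_sum _ fun i _ => (measurable_pi_apply i).const_mul _) _
  have hEm : ∀ (c : P → ℝ) (a : A), MeasurableSet
      {z : ι → ℝ | act (argminTie fun p => c p + ∑ i, φ p i * z i) = a} := by
    intro c a
    have hrw : {z : ι → ℝ | act (argminTie fun p => c p + ∑ i, φ p i * z i) = a}
        = ⋃ p0, ⋃ (_ : act p0 = a),
            {z : ι → ℝ | argminTie (fun p => c p + ∑ i, φ p i * z i) = p0} := by
      ext z
      simp only [Set.mem_setOf_eq, Set.mem_iUnion]
      constructor
      · intro h; exact ⟨_, h, rfl⟩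
      · rintro ⟨p0, h, hp⟩; rw [hp]; exact h
    rw [hrw]
    exact MeasurableSet.iUnion fun p0 => MeasurableSet.iUnion fun _ =>
      measurableSet_argminTie _ (hsm c) p0
  have hfin : ∀ s : Set (ι → ℝ), ν s ≠ ⊤ := fun s => (measure_lt_top ν s).ne
  have hsum_meas : ∀ (c : P → ℝ),
      (∑ a : A, ν {z : ι → ℝ | act (argminTie fun p => c p + ∑ i, φ p i * z i) = a}) = 1 := by
    intro c
    have h := MeasureTheory.sum_measure_preimage_singleton (μ := ν)
      (f := fun z : ι → ℝ => act (argminTie fun p => c p + ∑ i, φ p i * z i))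
      (Finset.univ : Finset A) (fun y _ => hEm c y)
    simpa [Set.preimage] using h
  -- key measure inequality
  have hkey : ∀ a : A,
      ν {z : ι → ℝ | act (argminTie fun p => c0 p + ∑ i, φ p i * z i) = a}
        ≤ ENNReal.ofReal (Real.exp (ε * W)) *
          ν {z : ι → ℝ | act (argminTie fun p => c1 p + ∑ i, φ p i * z i) = a} := by
    intro a
    set B : Set (ι → ℝ) := ⋃ (pq : P × P), ⋃ (_ : φ pq.1 ≠ φ pq.2),
      {z | c1 pq.1 + ∑ i, φ pq.1 i * z i = c1 pq.2 + ∑ i, φ pq.2 i * z i} with hB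
    have hBnull : (volume : Measure (ι → ℝ)) B = 0 := by
      rw [hB]
      refine measure_iUnion_null fun pq => measure_iUnion_null fun hne => ?_
      obtain ⟨i0, hi0⟩ := Function.ne_iff.mp hne
      have hset : {z : ι → ℝ | c1 pq.1 + ∑ i, φ pq.1 i * z i
            = c1 pq.2 + ∑ i, φ pq.2 i * z i}
          = {z : ι → ℝ | ∑ i, (φ pq.1 i - φ pq.2 i) * z i = c1 pq.2 - c1 pq.1} := by
        ext z
        simp only [Set.mem_setOf_eq]
        rw [show ∑ i, (φ pq.1 i - φ pq.2 i) * z i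
            = (∑ i, φ pq.1 i * z i) - ∑ i, φ pq.2 i * z i by
          rw [← Finset.sum_sub_distrib]; exact Finset.sum_congr rfl fun i _ => by ring]
        constructor <;> intro h <;> linarith
      rw [hset]
      exact hyperplane_null _ i0 (sub_ne_zero.mpr hi0) _
    have hincl : {z : ι → ℝ | act (argminTie fun p => c0 p + ∑ i, φ p i * z i) = a}
        ⊆ (fun z => z + w a) ⁻¹'
          ({z : ι → ℝ | act (argminTie fun p => c1 p + ∑ i, φ p i * z i) = a} ∪ B) := by
      intro z hz
      simp only [Set.mem_preimage]
      by_cases hzB : z + w a ∈ B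
      · exact Or.inr hzB
      refine Or.inl ?_
      set p := argminTie fun p => c0 p + ∑ i, φ p i * z i with hp
      have hza : act p = a := hz
      have hmin0 : ∀ q, c0 p + ∑ i, φ p i * z i ≤ c0 q + ∑ i, φ q i * z i := by
        have h := argminTie_min (fun p : P => c0 p + ∑ i, φ p i * z i)
        rwa [← hp] at h
      have hshift : ∀ q : P, ∑ i, φ q i * (z + w a) i
          = (∑ i, φ q i * z i) + H a (act q) := by
        intro q
        rw [← hwact a q, ← Finset.sum_add_distrib]
        exact Finset.sum_congr rfl fun i _ => by simp only [Pi.add_apply]; ring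
      have hmin1 : ∀ q, (c1 p + ∑ i, φ p i * (z + w a) i)
          ≤ c1 q + ∑ i, φ q i * (z + w a) i := by
        intro q
        rw [hshift p, hshift q, hc1 p, hc1 q, hza]
        by_cases hq : act q = a
        · rw [hq]
          have := hmin0 q
          linarith
        · have h1 := hH a (act q) hq
          have h2 := abs_le.mp (hg a)
          have h3 := abs_le.mp (hg (act q))
          have := hmin0 q
          linarith
      set p1 := argminTie fun q => c1 q + ∑ i, φ q i * (z + w a) i with hp1
      have heq : c1 p1 + ∑ i, φ p1 i * (z + w a) i
          = c1 p + ∑ i, φ p i * (z + w a) i := by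
        have h := argminTie_min (fun q : P => c1 q + ∑ i, φ q i * (z + w a) i)
        rw [← hp1] at h
        exact le_antisymm (h p) (hmin1 p1)
      have hφeq : φ p1 = φ p := by
        by_contra hne
        exact hzB (Set.mem_iUnion.mpr ⟨(p1, p), Set.mem_iUnion.mpr ⟨hne, heq⟩⟩)
      show act p1 = a
      rw [hact p1 p hφeq, hza]
    calc ν {z : ι → ℝ | act (argminTie fun p => c0 p + ∑ i, φ p i * z i) = a}
        ≤ ν ((fun z => z + w a) ⁻¹'
            ({z : ι → ℝ | act (argminTie fun p => c1 p + ∑ i, φ p i * z i) = a} ∪ B)) :=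
          measure_mono hincl
      _ ≤ ν ((fun z => z + w a) ⁻¹'
            {z : ι → ℝ | act (argminTie fun p => c1 p + ∑ i, φ p i * z i) = a})
          + ν ((fun z => z + w a) ⁻¹' B) := by
          rw [Set.preimage_union]; exact measure_union_le _ _
      _ = ν ((fun z => z + w a) ⁻¹'
            {z : ι → ℝ | act (argminTie fun p => c1 p + ∑ i, φ p i * z i) = a}) := by
          have hvol : (volume : Measure (ι → ℝ)) ((fun z => z + w a) ⁻¹' B) = 0 := by
            rw [measure_preimage_add_right]; exact hBnull
          rw [laplacePi_ac hvol, add_zero]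
      _ ≤ ENNReal.ofReal (Real.exp (ε * ∑ i, |w a i|)) *
            ν {z : ι → ℝ | act (argminTie fun p => c1 p + ∑ i, φ p i * z i) = a} :=
          laplacePi_translate_le hε (w a) _ (hEm c1 a)
      _ ≤ ENNReal.ofReal (Real.exp (ε * W)) *
            ν {z : ι → ℝ | act (argminTie fun p => c1 p + ∑ i, φ p i * z i) = a} := by
          gcongr
          exact hw a
  -- integral representation
  have hrepr : ∀ (c : P → ℝ),
      (fun z : ι → ℝ => g (act (argminTie fun p => c p + ∑ i, φ p i * z i)))
      = fun z => ∑ a : A,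
          ({z : ι → ℝ | act (argminTie fun p => c p + ∑ i, φ p i * z i) = a}).indicator
            (fun _ => g a) z := by
    intro c
    funext z
    simp only [Set.indicator_apply, Set.mem_setOf_eq]
    rw [Finset.sum_ite_eq]
    simp
  have hinteg : ∀ (c : P → ℝ), Integrable
      (fun z : ι → ℝ => g (act (argminTie fun p => c p + ∑ i, φ p i * z i))) ν := by
    intro c
    rw [hrepr c]
    apply integrable_finset_sum
    intro a _
    rw [integrable_indicator_iff (hEm c a)]
    exact integrableOn_const (measure_lt_top ν _).ne
  have hIval : ∀ (c : P → ℝ),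
      (∫ z, g (act (argminTie fun p => c p + ∑ i, φ p i * z i)) ∂ν)
      = ∑ a, g a *
          (ν {z : ι → ℝ | act (argminTie fun p => c p + ∑ i, φ p i * z i) = a}).toReal := by
    intro c
    rw [hrepr c, integral_finset_sum _ (fun a _ =>
      (integrable_indicator_iff (hEm c a)).mpr
        (integrableOn_const (measure_lt_top ν _).ne))]
    refine Finset.sum_congr rfl fun a _ => ?_
    rw [integral_indicator_const _ (hEm c a)]
    simp [mul_comm, Measure.real]
  -- real-valued final step
  have final : ∀ u v : A → ℝ, (∀ a, 0 ≤ u a) → (∑ a, u a = 1) → (∑ a, v a = 1) →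
      (∀ a, u a ≤ Real.exp (ε * W) * v a) →
      (∑ a, g a * u a) - (∑ a, g a * v a) ≤ 2 * F * (ε * W) := by
    intro u v hu hus hvs huv
    have hstep : ∀ a, u a - v a ≤ (ε * W) * u a := by
      intro a
      have h1 := huv a
      have h2 : Real.exp (-(ε * W)) * u a ≤ v a := by
        have hh := mul_le_mul_of_nonneg_left h1 (Real.exp_nonneg (-(ε * W)))
        rwa [← mul_assoc, ← Real.exp_add, neg_add_cancel, Real.exp_zero, one_mul] at hh
      have h3 : -(ε * W) + 1 ≤ Real.exp (-(ε * W)) := Real.add_one_le_exp _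
      nlinarith [hu a]
    have hterm : ∀ a, (g a + F) * (u a - v a) ≤ 2 * F * ((ε * W) * u a) := by
      intro a
      have hga := abs_le.mp (hg a)
      by_cases hd : 0 ≤ u a - v a
      · calc (g a + F) * (u a - v a) ≤ (2 * F) * (u a - v a) := by nlinarith
          _ ≤ 2 * F * ((ε * W) * u a) :=
            mul_le_mul_of_nonneg_left (hstep a) (by linarith)
      · have hle : (g a + F) * (u a - v a) ≤ 0 :=
          mul_nonpos_of_nonneg_of_nonpos (by linarith) (by linarith)
        have hge : 0 ≤ 2 * F * ((ε * W) * u a) :=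
          mul_nonneg (by linarith) (mul_nonneg (mul_nonneg hε.le hW0) (hu a))
        linarith
    have hexp : (∑ a, (g a + F) * (u a - v a))
        = ((∑ a, g a * u a) - (∑ a, g a * v a))
          + F * ((∑ a, u a) - (∑ a, v a)) := by
      rw [← Finset.sum_sub_distrib, ← Finset.sum_sub_distrib, Finset.mul_sum,
        ← Finset.sum_add_distrib]
      exact Finset.sum_congr rfl fun a _ => by ring
    have hsum_bound : (∑ a, (g a + F) * (u a - v a)) ≤ ∑ a, 2 * F * ((ε * W) * u a) :=
      Finset.sum_le_sum fun a _ => hterm a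
    have hmulsum : (∑ a, 2 * F * ((ε * W) * u a)) = 2 * F * (ε * W) := by
      have h1 : ∀ a : A, 2 * F * ((ε * W) * u a) = (2 * F * (ε * W)) * u a :=
        fun a => by ring
      simp_rw [h1]
      rw [← Finset.mul_sum, hus, mul_one]
    have := hexp
    rw [hus, hvs] at this
    simp only [sub_self, mul_zero, add_zero] at this
    linarith [hsum_bound, hmulsum ▸ hsum_bound]
  rw [integral_sub (hinteg c0) (hinteg c1), hIval c0, hIval c1]
  apply final
  · intro a; exact ENNReal.toReal_nonneg
  · rw [← ENNReal.toReal_sum (fun a _ => hfin _), hsum_meas c0]; simp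
  · rw [← ENNReal.toReal_sum (fun a _ => hfin _), hsum_meas c1]; simp
  · intro a
    have h := hkey a
    have h2 := ENNReal.toReal_mono
      (ENNReal.mul_ne_top ENNReal.ofReal_ne_top (hfin _)) h
    rwa [ENNReal.toReal_mul, ENNReal.toReal_ofReal (Real.exp_nonneg _)] at h2

/-- **Transductive Stability.** In the transductive Context-FTPL setup
(`X` a finite set of `d` contexts, `P` the finite set of `N ≥ 2` policies with
a tie-breaking linear order, policies choosing at most `m` of the `K`
coordinates, perturbation `(ℓ_x(j))` i.i.d. Laplace(ε)), for any sequence of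
contexts `xs` and loss functions `f`, and any round `t < T`,
`E[f^t(π^t(x^t)) − f^t(π^{t+1}(x^t))] ≤ 4·ε·K·‖f^t‖_*²`, where `π^t`
(resp. `π^{t+1}`) is the tie-broken minimizer of the perturbed cumulative loss
over the first `t` (resp. `t+1`) rounds, under the same perturbation draw. -/
theorem transductive_stability
    {X P : Type*} [Fintype X] [Fintype P] [Nonempty P] [LinearOrder P]
    {K m d N : ℕ} (hK : 1 ≤ K) (hm : 1 ≤ m)
    (hd : Fintype.card X = d) (hN : Fintype.card P = N) (hN2 : 2 ≤ N)
    (pol : P → X → Fin K → Bool)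
    (hsparse : ∀ p x, (Finset.univ.filter fun j => pol p x j = true).card ≤ m)
    {ε : ℝ} (hε : 0 < ε)
    (T : ℕ) (xs : ℕ → X) (f : ℕ → (Fin K → Bool) → ℝ) (t : ℕ) (ht : t < T) :
    (∫ z, (f t (pol (argminTie fun p : P =>
            (∑ τ ∈ Finset.range t, f τ (pol p (xs τ))) +
              ∑ xc : X, dotp (pol p xc) fun j => z (xc, j)) (xs t)) -
          f t (pol (argminTie fun p : P =>
            (∑ τ ∈ Finset.range (t + 1), f τ (pol p (xs τ))) +
              ∑ xc : X, dotp (pol p xc) fun j => z (xc, j)) (xs t)))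
        ∂(laplacePi (X × Fin K) ε)) ≤
      4 * ε * (K : ℝ) * dualNorm (f t) ^ 2 := by
  classical
  set F := dualNorm (f t) with hF
  have hg : ∀ a : Fin K → Bool, |f t a| ≤ F :=
    fun a => Finset.le_sup' (fun a => |f t a|) (Finset.mem_univ a)
  have hF0 : 0 ≤ F := le_trans (abs_nonneg _) (hg fun _ => false)
  -- rewrite the dot products as plain coordinate sums
  have hcost : ∀ (p : P) (z : X × Fin K → ℝ),
      (∑ xc : X, dotp (pol p xc) fun j => z (xc, j))
        = ∑ i : X × Fin K, (if pol p i.1 i.2 then (1:ℝ) else 0) * z i := by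
    intro p z
    rw [Fintype.sum_prod_type]
    refine Finset.sum_congr rfl fun x _ => ?_
    rw [dotp]
    refine Finset.sum_congr rfl fun j _ => ?_
    by_cases h : pol p x j <;> simp [h]
  have hEq : (fun z : X × Fin K → ℝ =>
        (f t (pol (argminTie fun p : P =>
            (∑ τ ∈ Finset.range t, f τ (pol p (xs τ))) +
              ∑ xc : X, dotp (pol p xc) fun j => z (xc, j)) (xs t)) -
          f t (pol (argminTie fun p : P =>
            (∑ τ ∈ Finset.range (t + 1), f τ (pol p (xs τ))) +
              ∑ xc : X, dotp (pol p xc) fun j => z (xc, j)) (xs t))))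
      = fun z : X × Fin K → ℝ =>
        (f t (pol (argminTie fun p : P =>
            (∑ τ ∈ Finset.range t, f τ (pol p (xs τ))) +
              ∑ i : X × Fin K, (if pol p i.1 i.2 then (1:ℝ) else 0) * z i) (xs t)) -
          f t (pol (argminTie fun p : P =>
            (∑ τ ∈ Finset.range (t + 1), f τ (pol p (xs τ))) +
              ∑ i : X × Fin K, (if pol p i.1 i.2 then (1:ℝ) else 0) * z i) (xs t))) := by
    funext z
    have h0 : (fun p : P => (∑ τ ∈ Finset.range t, f τ (pol p (xs τ))) +
          ∑ xc : X, dotp (pol p xc) fun j => z (xc, j))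
        = fun p : P => (∑ τ ∈ Finset.range t, f τ (pol p (xs τ))) +
          ∑ i : X × Fin K, (if pol p i.1 i.2 then (1:ℝ) else 0) * z i :=
      funext fun p => by rw [hcost p z]
    have h1 : (fun p : P => (∑ τ ∈ Finset.range (t + 1), f τ (pol p (xs τ))) +
          ∑ xc : X, dotp (pol p xc) fun j => z (xc, j))
        = fun p : P => (∑ τ ∈ Finset.range (t + 1), f τ (pol p (xs τ))) +
          ∑ i : X × Fin K, (if pol p i.1 i.2 then (1:ℝ) else 0) * z i :=
      funext fun p => by rw [hcost p z]
    rw [h0, h1]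
  rw [hEq]
  -- apply the core lemma
  have hwabs : ∀ (a : Fin K → Bool) (x : X) (j : Fin K),
      |if x = xs t then (if a j then -(2*F) else 2*F) else 0| = if x = xs t then 2*F else 0 := by
    intro a x j
    by_cases hx : x = xs t
    · by_cases ha : a j <;> simp [hx, ha, abs_of_nonneg, hF0, abs_neg]
    · simp [hx]
  have hcore := stab_core (ι := X × Fin K) (P := P) (A := Fin K → Bool)
    (ε := ε) (F := F) (W := 2 * F * K) hε hF0 (by positivity)
    (fun p i => if pol p i.1 i.2 then (1:ℝ) else 0)
    (fun p => pol p (xs t)) (f t)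
    (fun p => ∑ τ ∈ Finset.range t, f τ (pol p (xs τ)))
    (fun p => ∑ τ ∈ Finset.range (t + 1), f τ (pol p (xs τ)))
    (fun a i => if i.1 = xs t then (if a i.2 then -(2*F) else 2*F) else 0)
    (fun a b => ∑ j : Fin K, if b j then (if a j then -(2*F) else 2*F) else 0)
    hg
    (fun p => Finset.sum_range_succ _ _)
    (by -- hact
      intro p q hφ
      funext j
      have h := congrFun hφ (xs t, j)
      by_cases h1 : pol p (xs t) j <;> by_cases h2 : pol q (xs t) j <;> simp_all)
    (by -- hw
      intro a
      rw [Fintype.sum_prod_type]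
      have : ∀ x : X, (∑ j : Fin K,
          |if x = xs t then (if a j then -(2*F) else 2*F) else 0|)
          = if x = xs t then (K : ℝ) * (2*F) else 0 := by
        intro x
        simp_rw [hwabs a x]
        by_cases hx : x = xs t <;> simp [hx, Finset.sum_const, nsmul_eq_mul]
      simp_rw [this]
      rw [Finset.sum_ite_eq' Finset.univ (xs t)]
      simp only [Finset.mem_univ, if_true]
      nlinarith [hF0]
    )
    (by -- hwact
      intro a p
      rw [Fintype.sum_prod_type]
      have hin : ∀ x : X, (∑ j : Fin K, (if pol p x j then (1:ℝ) else 0) *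
            (if x = xs t then (if a j then -(2*F) else 2*F) else 0))
          = if x = xs t then (∑ j : Fin K, if pol p x j then (if a j then -(2*F) else 2*F) else 0)
            else 0 := by
        intro x
        by_cases hx : x = xs t
        · simp only [hx, if_true]
          refine Finset.sum_congr rfl fun j _ => ?_
          by_cases h : pol p (xs t) j <;> simp [h]
        · simp [hx]
      simp_rw [hin]
      rw [Finset.sum_ite_eq' Finset.univ (xs t)]
      simp)
    (by -- hH
      intro a b hne
      have hdiff : (∑ j : Fin K, if b j then (if a j then -(2*F) else 2*F) else 0)
          - (∑ j : Fin K, if a j then (if a j then -(2*F) else 2*F) else 0)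
          = ∑ j : Fin K, (if a j = b j then 0 else 2*F) := by
        rw [← Finset.sum_sub_distrib]
        refine Finset.sum_congr rfl fun j _ => ?_
        by_cases h1 : a j <;> by_cases h2 : b j <;> simp [h1, h2] <;> ring
      obtain ⟨j0, hj0⟩ := Function.ne_iff.mp hne
      have hterm : (2*F : ℝ) ≤ ∑ j : Fin K, (if a j = b j then 0 else 2*F) := by
        have hval : (if a j0 = b j0 then (0:ℝ) else 2*F) = 2*F :=
          if_neg (fun h => hj0 h.symm)
        calc (2*F : ℝ) = (if a j0 = b j0 then (0:ℝ) else 2*F) := hval.symm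
          _ ≤ ∑ j : Fin K, (if a j = b j then 0 else 2*F) :=
            Finset.single_le_sum (f := fun j => if a j = b j then (0:ℝ) else 2*F)
              (fun j _ => by by_cases h : a j = b j <;> simp [h] <;> linarith)
              (Finset.mem_univ j0)
      linarith)
  calc _ ≤ 2 * F * (ε * (2 * F * K)) := hcore
    _ = 4 * ε * (K : ℝ) * F ^ 2 := by ring
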